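/- Let (X, μ) be a finite measure space with 0 < μ(X) < ∞, let β : X → X be an invertible measure-preserving transformation which is ergodic, and let γ : X → ℝ be measurable with γ(x) > 0 for every x. Suppose ρ : X → ℝ is a measurable function satisfying ρ(ζ) = (γ(β⁻¹(ζ))/γ(ζ)) · ρ(β⁻¹(ζ)) for μ-almost every ζ (i.e. ρ is invariant under the adjoint weighted composition operator T*). Then there is a constant c ∈ ℝ such that ρ(ζ) = c·γ(ζ)⁻¹ for μ-almost every ζ. -/

import Mathlib

open MeasureTheory
open scoped ENNReal

/-- If `β` is an ergodic invertible measure-preserving transformation of a finite measure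
space, `γ > 0` is measurable, and `ρ` satisfies `ρ(ζ) = (γ(β⁻¹ ζ)/γ(ζ)) ρ(β⁻¹ ζ)` a.e.
(i.e. `ρ` is invariant under the adjoint weighted composition operator `T*`), then
`ρ = c·γ⁻¹` a.e. for some constant `c`. -/
theorem stmt6 {X : Type*} [MeasurableSpace X] (μ : Measure X)
    (hμpos : 0 < μ Set.univ) (hμfin : μ Set.univ < ⊤)
    (β : X ≃ᵐ X) (hβ : MeasurePreserving β μ μ) (hβ' : MeasurePreserving β.symm μ μ)
    (herg : Ergodic β μ)
    (γ : X → ℝ) (hγ : Measurable γ) (hγpos : ∀ x, 0 < γ x)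
    (ρ : X → ℝ) (hρ : Measurable ρ)
    (hinv : ∀ᵐ ζ ∂μ, ρ ζ = (γ (β.symm ζ) / γ ζ) * ρ (β.symm ζ)) :
    ∃ c : ℝ, ∀ᵐ ζ ∂μ, ρ ζ = c * (γ ζ)⁻¹ := by
  set g : X → ℝ := fun ζ => γ ζ * ρ ζ with hg
  have hinv' : ∀ᵐ ζ ∂μ, ρ (β ζ) = (γ (β.symm (β ζ)) / γ (β ζ)) * ρ (β.symm (β ζ)) :=
    hβ.quasiMeasurePreserving.ae hinv
  have hgcomp : g ∘ β =ᵐ[μ] g := by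
    filter_upwards [hinv'] with ζ hζ
    simp only [Function.comp_apply, hg, β.symm_apply_apply] at hζ ⊢
    rw [hζ]
    field_simp
    rw [mul_assoc]
    exact mul_div_cancel_left₀ _ (hγpos (β ζ)).ne'
  obtain ⟨c, hc⟩ := herg.ae_eq_const_of_ae_eq_comp₀
    ((hγ.mul hρ).nullMeasurable) hgcomp
  refine ⟨c, ?_⟩
  filter_upwards [hc] with ζ hζ
  have hne : γ ζ ≠ 0 := (hγpos ζ).ne'
  have : γ ζ * ρ ζ = c := hζ
  field_simp
  linarith [this]
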